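/- arXiv:2305.04304 — 2 statements merged into one kernel-verified Lean document; each statement's English description precedes it below -/
import Mathlib

section
/- Let p be prime, λ ∈ 𝔽_p^* and t ∈ 𝔽_p^*. If (h₁,h₂) is a nonzero integer vector with h₁ + h₂·t ≡ 0 (mod p) minimizing |h₁h₂| over such solutions for t, and (k₁,k₂) is a nonzero integer vector with k₁ + k₂·λt ≡ 0 (mod p) minimizing |k₁k₂| for λt, then h₂k₁ − h₁k₂λ ≡ 0 (mod p) and consequently ρ₂(λ,p) ≤ ρ₂(λt,p)·ρ₂(t,p), where ρ₂(μ,p) denotes the minimum of max(|h₁|,1)·max(|h₂|,1) over nonzero integer vectors (h₁,h₂) with h₁ + h₂μ ≡ 0 (mod p). -/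
noncomputable def rho2 (p : ℕ) (μ : ℤ) : ℕ :=
  sInf {n : ℕ | ∃ h₁ h₂ : ℤ, ¬(h₁ = 0 ∧ h₂ = 0) ∧ (p : ℤ) ∣ h₁ + h₂ * μ ∧
    (n : ℤ) = max |h₁| 1 * max |h₂| 1}

lemma rho2_lt (p : ℕ) (hp : p.Prime) (μ : ℤ) (hμ : ¬ (p : ℤ) ∣ μ) :
    (rho2 p μ : ℤ) < p := by
  have hp0 : (0:ℤ) < p := by exact_mod_cast hp.pos
  have hr : μ % p ≠ 0 := fun h => hμ (Int.dvd_of_emod_eq_zero h)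
  have hr0 : 0 < μ % p := lt_of_le_of_ne (Int.emod_nonneg μ hp0.ne') (Ne.symm hr)
  have hrp : μ % p < p := Int.emod_lt_of_pos μ hp0
  have hmem : (μ % p).toNat ∈ {n : ℕ | ∃ h₁ h₂ : ℤ, ¬(h₁ = 0 ∧ h₂ = 0) ∧
      (p : ℤ) ∣ h₁ + h₂ * μ ∧ (n : ℤ) = max |h₁| 1 * max |h₂| 1} := by
    refine ⟨-(μ % p), 1, by simp, ?_, ?_⟩
    · have : -(μ % p) + 1 * μ = p * (μ / p) := by
        have := Int.emod_add_mul_ediv μ p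
        linarith
      exact ⟨μ / p, this⟩
    · rw [Int.toNat_of_nonneg hr0.le, abs_neg, abs_of_pos hr0]
      simp [max_eq_left (show (1:ℤ) ≤ μ % p by omega)]
  have := Nat.sInf_le hmem
  have h2 : ((μ % p).toNat : ℤ) < p := by rwa [Int.toNat_of_nonneg hr0.le]
  calc (rho2 p μ : ℤ) ≤ ((μ % p).toNat : ℤ) := by exact_mod_cast this
    _ < p := h2

theorem rho2_submultiplicative (p : ℕ) (hp : p.Prime) (lam t : ℤ)
    (hlam : ¬ (p : ℤ) ∣ lam) (ht : ¬ (p : ℤ) ∣ t)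
    (h₁ h₂ k₁ k₂ : ℤ)
    (hh0 : ¬(h₁ = 0 ∧ h₂ = 0)) (hh : (p : ℤ) ∣ h₁ + h₂ * t)
    (hhmin : max |h₁| 1 * max |h₂| 1 = (rho2 p t : ℤ))
    (hk0 : ¬(k₁ = 0 ∧ k₂ = 0)) (hk : (p : ℤ) ∣ k₁ + k₂ * (lam * t))
    (hkmin : max |k₁| 1 * max |k₂| 1 = (rho2 p (lam * t) : ℤ)) :
    (p : ℤ) ∣ h₂ * k₁ - h₁ * k₂ * lam ∧ rho2 p lam ≤ rho2 p (lam * t) * rho2 p t := by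
  have hpz : Prime (p:ℤ) := Nat.prime_iff_prime_int.mp hp
  have hp0 : (0:ℤ) < p := by exact_mod_cast hp.pos
  have hlt : ¬ (p : ℤ) ∣ lam * t := fun hd => by
    rcases hpz.dvd_mul.mp hd with h | h
    · exact hlam h
    · exact ht h
  have hdvd : (p : ℤ) ∣ h₂ * k₁ - h₁ * k₂ * lam := by
    have e : h₂ * k₁ - h₁ * k₂ * lam =
        h₂ * (k₁ + k₂ * (lam * t)) - (k₂ * lam) * (h₁ + h₂ * t) := by ring
    rw [e]
    exact dvd_sub (hk.mul_left h₂) (hh.mul_left (k₂ * lam))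
  -- all coordinates nonzero
  have hrt : (rho2 p t : ℤ) < p := rho2_lt p hp t ht
  have hrlt : (rho2 p (lam * t) : ℤ) < p := rho2_lt p hp (lam * t) hlt
  have key : ∀ a b μ : ℤ, ¬ (p:ℤ) ∣ μ → ¬(a = 0 ∧ b = 0) → (p:ℤ) ∣ a + b * μ →
      max |a| 1 * max |b| 1 < p → a ≠ 0 ∧ b ≠ 0 := by
    intro a b μ hμ hab hd hlt'
    constructor
    · rintro rfl
      have hb : b ≠ 0 := fun h => hab ⟨rfl, h⟩
      have : (p:ℤ) ∣ b := by
        rcases hpz.dvd_mul.mp (by simpa using hd) with h | h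
        · exact h
        · exact absurd h hμ
      have hbp : (p:ℤ) ≤ |b| := Int.le_of_dvd (abs_pos.mpr hb) ((dvd_abs _ _).mpr this)
      have h1 : (p:ℤ) ≤ max |b| 1 := le_trans hbp (le_max_left _ _)
      simp only [abs_zero, max_self] at hlt'
      simp at hlt'
      linarith
    · rintro rfl
      have ha : a ≠ 0 := fun h => hab ⟨h, rfl⟩
      have : (p:ℤ) ∣ a := by simpa using hd
      have hap : (p:ℤ) ≤ |a| := Int.le_of_dvd (abs_pos.mpr ha) ((dvd_abs _ _).mpr this)
      have h1 : (p:ℤ) ≤ max |a| 1 := le_trans hap (le_max_left _ _)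
      simp at hlt'
      linarith
  obtain ⟨hh1, hh2⟩ := key h₁ h₂ t ht hh0 hh (by rw [hhmin]; exact hrt)
  obtain ⟨hk1, hk2⟩ := key k₁ k₂ (lam * t) hlt hk0 hk (by rw [hkmin]; exact hrlt)
  refine ⟨hdvd, ?_⟩
  -- witness for rho2 p lam
  have hA : h₂ * k₁ ≠ 0 := mul_ne_zero hh2 hk1
  have hB : -(h₁ * k₂) ≠ 0 := neg_ne_zero.mpr (mul_ne_zero hh1 hk2)
  have habs : ∀ x : ℤ, x ≠ 0 → max |x| 1 = |x| :=
    fun x hx => max_eq_left (Int.one_le_abs (by omega))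
  have hmem : rho2 p (lam * t) * rho2 p t ∈ {n : ℕ | ∃ a b : ℤ, ¬(a = 0 ∧ b = 0) ∧
      (p : ℤ) ∣ a + b * lam ∧ (n : ℤ) = max |a| 1 * max |b| 1} := by
    refine ⟨h₂ * k₁, -(h₁ * k₂), fun h => hA h.1, ?_, ?_⟩
    · have e : h₂ * k₁ + -(h₁ * k₂) * lam = h₂ * k₁ - h₁ * k₂ * lam := by ring
      rw [e]; exact hdvd
    · rw [habs _ hA, habs _ hB]
      push_cast
      rw [← hhmin, ← hkmin, habs _ hh1, habs _ hh2, habs _ hk1, habs _ hk2,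
        abs_neg, abs_mul, abs_mul]
      ring
  exact Nat.sInf_le hmem
end

section
/- Let D, R ≥ 2 be real numbers and let E(D,R) be the set of primes p for which there exists λ ∈ 𝔽_p^* of multiplicative order d with 3 ≤ d < D and ρ₂(λ,p) < R, where ρ₂(λ,p) is the minimum of max(|h₁|,1)·max(|h₂|,1) over nonzero (h₁,h₂) ∈ ℤ² with h₁ + h₂λ ≡ 0 (mod p). Then #E(D,R) ≪ D²R(log R)²/log D. -/
lemma pow_card_filter_le (m n : ℕ) (hm : m ≠ 0) :
    (n+1) ^ ((m.primeFactors.filter (fun p => n < p)).card) ≤ m := by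
  calc (n+1) ^ ((m.primeFactors.filter (fun p => n < p)).card)
      ≤ ∏ p ∈ m.primeFactors.filter (fun p => n < p), p := by
        apply Finset.pow_card_le_prod
        intro p hp
        exact (Finset.mem_filter.mp hp).2
    _ ≤ ∏ p ∈ m.primeFactors, p := by
        apply Finset.prod_le_prod_of_subset_of_one_le' (Finset.filter_subset _ _)
        intro p hp _
        exact (Nat.prime_of_mem_primeFactors hp).one_lt.le
    _ ≤ m := Nat.le_of_dvd (Nat.pos_of_ne_zero hm) (Nat.prod_primeFactors_dvd m)

noncomputable def pairSet (z : ℕ) : Finset (ℤ × ℤ) :=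
  ((Finset.Icc (-(z:ℤ)) (z:ℤ)) ×ˢ (Finset.Icc (-(z:ℤ)) (z:ℤ))).filter
    (fun q => max |q.1| 1 * max |q.2| 1 ≤ (z:ℤ))

lemma pairSet_card (z : ℕ) (hz : 2 ≤ z) : ((pairSet z).card : ℝ) ≤ 20 * z * Real.log z := by
  classical
  set F : ℕ → Finset (ℤ × ℤ) := fun j =>
    ({(j:ℤ), -(j:ℤ)} : Finset ℤ) ×ˢ
      (Finset.Icc (-((z / max j 1 : ℕ) : ℤ)) ((z / max j 1 : ℕ) : ℤ)) with hF
  have hsub : pairSet z ⊆ (Finset.range (z+1)).biUnion F := by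
    rintro ⟨a, b⟩ hab
    rw [pairSet, Finset.mem_filter, Finset.mem_product, Finset.mem_Icc, Finset.mem_Icc] at hab
    obtain ⟨⟨⟨ha1, ha2⟩, hb1, hb2⟩, hprod⟩ := hab
    have hjz : a.natAbs ≤ z := by omega
    refine Finset.mem_biUnion.mpr ⟨a.natAbs, Finset.mem_range.mpr (by omega), ?_⟩
    rw [hF, Finset.mem_product]
    refine ⟨?_, ?_⟩
    · simp only [Finset.mem_insert, Finset.mem_singleton]
      rcases Int.natAbs_eq a with h | h
      · exact Or.inl h
      · exact Or.inr h
    · rw [Finset.mem_Icc]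
      have hmaxa : max |a| 1 = ((max a.natAbs 1 : ℕ) : ℤ) := by
        rw [Int.abs_eq_natAbs, Nat.cast_max, Nat.cast_one]
      have hmaxb : max |b| 1 = ((max b.natAbs 1 : ℕ) : ℤ) := by
        rw [Int.abs_eq_natAbs, Nat.cast_max, Nat.cast_one]
      rw [hmaxa, hmaxb] at hprod
      have hnat : max a.natAbs 1 * max b.natAbs 1 ≤ z := by exact_mod_cast hprod
      have hnat' : max b.natAbs 1 * max a.natAbs 1 ≤ z := by rwa [mul_comm] at hnat
      have hq : max b.natAbs 1 ≤ z / max a.natAbs 1 :=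
        (Nat.le_div_iff_mul_le (by omega)).mpr hnat'
      have hb' : b.natAbs ≤ z / max a.natAbs 1 := le_trans (le_max_left _ _) hq
      have habs : |b| ≤ ((z / max a.natAbs 1 : ℕ) : ℤ) := by
        rw [Int.abs_eq_natAbs]; exact_mod_cast hb'
      exact abs_le.mp habs
  have hFj : ∀ j : ℕ, (F j).card ≤ 2 * (2 * (z / max j 1) + 1) := by
    intro j
    rw [hF]
    dsimp only
    rw [Finset.card_product]
    have h2 : (Finset.Icc (-((z / max j 1 : ℕ) : ℤ)) ((z / max j 1 : ℕ) : ℤ)).card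
        = 2 * (z / max j 1) + 1 := by
      rw [Int.card_Icc]
      have he : ((z / max j 1 : ℕ) : ℤ) + 1 - (-((z / max j 1 : ℕ) : ℤ))
          = ((2 * (z / max j 1) + 1 : ℕ) : ℤ) := by push_cast; ring
      rw [he, Int.toNat_natCast]
    rw [h2]
    have h1 : ({(j:ℤ), -(j:ℤ)} : Finset ℤ).card ≤ 2 :=
      le_trans (Finset.card_insert_le _ _) (by simp)
    exact Nat.mul_le_mul_right _ h1
  have hcard : (pairSet z).card ≤ ∑ j ∈ Finset.range (z+1), (2 * (2 * (z / max j 1) + 1)) :=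
    le_trans (le_trans (Finset.card_le_card hsub) Finset.card_biUnion_le)
      (Finset.sum_le_sum fun j _ => hFj j)
  have hcastR : ((pairSet z).card : ℝ)
      ≤ ∑ j ∈ Finset.range (z+1), (4 * ((z / max j 1 : ℕ) : ℝ) + 2) := by
    calc ((pairSet z).card : ℝ)
        ≤ ((∑ j ∈ Finset.range (z+1), (2 * (2 * (z / max j 1) + 1)) : ℕ) : ℝ) := by
          exact_mod_cast hcard
      _ = ∑ j ∈ Finset.range (z+1), (4 * ((z / max j 1 : ℕ) : ℝ) + 2) := by
          push_cast
          apply Finset.sum_congr rfl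
          intro j _
          ring
  have hdiv : ∑ j ∈ Finset.range (z+1), ((z / max j 1 : ℕ) : ℝ)
      ≤ (z : ℝ) * (2 + Real.log z) := by
    rw [Finset.sum_range_succ']
    have h0 : ((z / max 0 1 : ℕ) : ℝ) = (z : ℝ) := by norm_num
    have hterm : ∀ i ∈ Finset.range z, ((z / max (i+1) 1 : ℕ) : ℝ) ≤ (z : ℝ) * ((i+1 : ℝ))⁻¹ := by
      intro i _
      have hmx : max (i+1) 1 = i + 1 := by omega
      rw [hmx]
      calc ((z / (i+1) : ℕ) : ℝ) ≤ (z : ℝ) / (((i+1 : ℕ)) : ℝ) := Nat.cast_div_le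
        _ = (z : ℝ) * ((i+1 : ℝ))⁻¹ := by push_cast; ring
    have hharm : ∑ i ∈ Finset.range z, ((i+1 : ℝ))⁻¹ = (harmonic z : ℝ) := by
      rw [harmonic]
      push_cast
      rfl
    calc ∑ i ∈ Finset.range z, ((z / max (i+1) 1 : ℕ) : ℝ) + ((z / max 0 1 : ℕ) : ℝ)
        ≤ ∑ i ∈ Finset.range z, (z : ℝ) * ((i+1 : ℝ))⁻¹ + (z : ℝ) := by
          rw [h0]; exact add_le_add (Finset.sum_le_sum hterm) le_rfl
      _ = (z : ℝ) * (harmonic z : ℝ) + z := by rw [← Finset.mul_sum, hharm]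
      _ ≤ (z : ℝ) * (1 + Real.log z) + z := by
          have h := harmonic_le_one_add_log z
          have hz0 : (0:ℝ) ≤ z := by positivity
          nlinarith [h]
      _ = (z : ℝ) * (2 + Real.log z) := by ring
  have hlog2 : (0.693 : ℝ) ≤ Real.log z := by
    calc (0.693:ℝ) ≤ Real.log 2 := by
          have := Real.log_two_gt_d9; linarith
      _ ≤ Real.log z := Real.log_le_log (by norm_num) (by exact_mod_cast hz)
  have hz0 : (2:ℝ) ≤ (z:ℝ) := by exact_mod_cast hz
  have hexpand : ∑ j ∈ Finset.range (z+1), (4 * ((z / max j 1 : ℕ) : ℝ) + 2)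
      = 4 * (∑ j ∈ Finset.range (z+1), ((z / max j 1 : ℕ) : ℝ)) + 2 * (z+1) := by
    rw [Finset.sum_add_distrib, ← Finset.mul_sum, Finset.sum_const, Finset.card_range,
      nsmul_eq_mul]
    push_cast
    ring
  rw [hexpand] at hcastR
  have : ((pairSet z).card : ℝ) ≤ 4 * ((z : ℝ) * (2 + Real.log z)) + 2 * ((z:ℝ)+1) := by
    linarith [hdiv]
  nlinarith [this, mul_le_mul_of_nonneg_left hlog2 (by linarith : (0:ℝ) ≤ (z:ℝ))]

lemma cover (n z p : ℕ) (hp : p.Prime)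
    (lam : (ZMod p)ˣ) (hd3 : 3 ≤ orderOf lam) (hdn : orderOf lam ≤ n)
    (h₁ h₂ : ℤ) (hne : ¬(h₁ = 0 ∧ h₂ = 0))
    (hdvd : (p:ℤ) ∣ h₁ + h₂ * ((lam : ZMod p).val : ℤ))
    (hprod : max |h₁| 1 * max |h₂| 1 ≤ (z:ℤ)) :
    p ≤ z ∨ p ≤ n ∨
      ((h₁, h₂) ∈ pairSet z ∧ orderOf lam ∈ Finset.Icc 3 n ∧ n < p ∧
       p ∈ ((h₁ ^ orderOf lam - (-h₂) ^ orderOf lam).natAbs).primeFactors) := by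
  haveI : Fact p.Prime := ⟨hp⟩
  set d := orderOf lam with hd
  set L : ZMod p := (lam : ZMod p) with hL
  set μ : ℤ := (L.val : ℤ) with hμdef
  have hμ : ((μ : ℤ) : ZMod p) = L := by
    rw [hμdef]
    push_cast [ZMod.natCast_val]
    rfl
  have h1z : |h₁| ≤ (z:ℤ) :=
    le_trans (le_max_left _ _) (le_trans (le_mul_of_one_le_right
      (le_trans (abs_nonneg h₁) (le_max_left _ _)) (le_max_right _ _)) hprod)
  have h2z : |h₂| ≤ (z:ℤ) :=
    le_trans (le_max_left _ _) (le_trans (le_mul_of_one_le_left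
      (le_trans (abs_nonneg h₂) (le_max_left _ _)) (le_max_right _ _)) hprod)
  have hpint : Prime (p:ℤ) := Nat.prime_iff_prime_int.mp hp
  by_cases hpd2 : (p:ℤ) ∣ h₂
  · left
    have hph₁ : (p:ℤ) ∣ h₁ := by
      have h' : (p:ℤ) ∣ h₂ * μ := hpd2.mul_right μ
      have := dvd_sub hdvd h'
      simpa using this
    rcases eq_or_ne h₁ 0 with h10 | h10
    · have h20 : h₂ ≠ 0 := fun h => hne ⟨h10, h⟩
      have : (p:ℤ) ≤ |h₂| := Int.le_of_dvd (abs_pos.mpr h20) ((dvd_abs _ _).mpr hpd2)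
      exact_mod_cast le_trans this h2z
    · have : (p:ℤ) ≤ |h₁| := Int.le_of_dvd (abs_pos.mpr h10) ((dvd_abs _ _).mpr hph₁)
      exact_mod_cast le_trans this h1z
  · by_cases hpn : p ≤ n
    · exact Or.inr (Or.inl hpn)
    right; right
    have hcast : ((h₁ + h₂ * μ : ℤ) : ZMod p) = 0 :=
      (ZMod.intCast_zmod_eq_zero_iff_dvd _ p).mpr hdvd
    push_cast [hμ] at hcast
    have hcong : (h₁ : ZMod p) = -(h₂ : ZMod p) * L := by linear_combination hcast
    have hLd : L ^ d = 1 := by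
      rw [hL, ← Units.val_pow_eq_pow_val, hd, pow_orderOf_eq_one, Units.val_one]
    have hMzero : ((h₁ ^ d - (-h₂) ^ d : ℤ) : ZMod p) = 0 := by
      push_cast
      rw [hcong, mul_pow, hLd, mul_one, sub_self]
    have hpM : (p:ℤ) ∣ h₁ ^ d - (-h₂) ^ d :=
      (ZMod.intCast_zmod_eq_zero_iff_dvd _ p).mp hMzero
    have hh₂ : h₂ ≠ 0 := fun h => hpd2 (h ▸ dvd_zero _)
    have hM0 : h₁ ^ d - (-h₂) ^ d ≠ 0 := by
      intro h0
      have heq : h₁ ^ d = (-h₂) ^ d := sub_eq_zero.mp h0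
      have habs : h₁.natAbs = h₂.natAbs := by
        have hpow : h₁.natAbs ^ d = h₂.natAbs ^ d := by
          have := congrArg Int.natAbs heq
          simpa [Int.natAbs_pow] using this
        exact Nat.pow_left_injective (by omega) hpow
      have hdvd' := hdvd
      rcases Int.natAbs_eq_natAbs_iff.mp habs with he | he
      · -- h₁ = h₂ ⇒ lam = -1
        have hdd : (p:ℤ) ∣ h₂ * (1 + μ) := by
          have : h₂ * (1 + μ) = h₁ + h₂ * μ := by rw [he]; ring
          rwa [this]
        have hpμ : (p:ℤ) ∣ 1 + μ := (hpint.dvd_mul.mp hdd).resolve_left hpd2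
        have hc : ((1 + μ : ℤ) : ZMod p) = 0 := (ZMod.intCast_zmod_eq_zero_iff_dvd _ p).mpr hpμ
        push_cast [hμ] at hc
        have hLneg : L = -1 := by linear_combination hc
        have hlam : lam = -1 := Units.ext (by rw [← hL, hLneg]; simp)
        have hdvd2 : d ∣ 2 := orderOf_dvd_of_pow_eq_one (by rw [hlam]; simp)
        have := Nat.le_of_dvd two_pos hdvd2
        omega
      · -- h₁ = -h₂ ⇒ lam = 1
        have hdd : (p:ℤ) ∣ h₂ * (μ - 1) := by
          have : h₂ * (μ - 1) = h₁ + h₂ * μ := by rw [he]; ring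
          rwa [this]
        have hpμ : (p:ℤ) ∣ μ - 1 := (hpint.dvd_mul.mp hdd).resolve_left hpd2
        have hc : ((μ - 1 : ℤ) : ZMod p) = 0 := (ZMod.intCast_zmod_eq_zero_iff_dvd _ p).mpr hpμ
        push_cast [hμ] at hc
        have hLone : L = 1 := by linear_combination hc
        have hlam : lam = 1 := Units.ext (by rw [← hL, hLone]; simp)
        have : d = 1 := by rw [hd, hlam, orderOf_one]
        omega
    refine ⟨?_, ?_, by omega, ?_⟩
    · rw [pairSet, Finset.mem_filter, Finset.mem_product, Finset.mem_Icc, Finset.mem_Icc]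
      exact ⟨⟨abs_le.mp h1z, abs_le.mp h2z⟩, hprod⟩
    · rw [Finset.mem_Icc]; exact ⟨hd3, hdn⟩
    · refine Nat.mem_primeFactors.mpr ⟨hp, ?_, Int.natAbs_ne_zero.mpr hM0⟩
      have := Int.natAbs_dvd_natAbs.mpr hpM
      simpa using this

lemma rho2_spec (p : ℕ) (hp : 0 < p) (μ : ℤ) :
    ∃ h₁ h₂ : ℤ, ¬(h₁ = 0 ∧ h₂ = 0) ∧ (p : ℤ) ∣ h₁ + h₂ * μ ∧
      ((sInf {n : ℕ | ∃ h₁ h₂ : ℤ, ¬(h₁ = 0 ∧ h₂ = 0) ∧ (p : ℤ) ∣ h₁ + h₂ * μ ∧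
        (n : ℤ) = max |h₁| 1 * max |h₂| 1} : ℕ) : ℤ) = max |h₁| 1 * max |h₂| 1 := by
  have hmem : p ∈ {n : ℕ | ∃ h₁ h₂ : ℤ, ¬(h₁ = 0 ∧ h₂ = 0) ∧ (p : ℤ) ∣ h₁ + h₂ * μ ∧
      (n : ℤ) = max |h₁| 1 * max |h₂| 1} := by
    refine ⟨(p:ℤ), 0, ?_, ⟨1, by ring⟩, ?_⟩
    · intro ⟨h, _⟩
      exact hp.ne' (by exact_mod_cast h)
    · rw [abs_zero, max_eq_right (zero_le_one), mul_one,
        abs_of_nonneg (by positivity : (0:ℤ) ≤ (p:ℤ)),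
        max_eq_left (by exact_mod_cast hp : (1:ℤ) ≤ (p:ℤ))]
  exact Nat.sInf_mem ⟨p, hmem⟩

set_option maxHeartbeats 2000000 in
theorem card_exceptional_primes_bound :
    ∃ C > (0 : ℝ), ∀ D R : ℝ, 2 ≤ D → 2 ≤ R →
      (Nat.card {p : ℕ // p.Prime ∧ ∃ lam : (ZMod p)ˣ,
          3 ≤ orderOf lam ∧ (orderOf lam : ℝ) < D ∧
          (rho2 p (((lam : ZMod p).val : ℤ)) : ℝ) < R} : ℝ)
        ≤ C * D ^ 2 * R * (Real.log R) ^ 2 / Real.log D := by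
  classical
  refine ⟨1000, by norm_num, ?_⟩
  intro D R hD hR
  set n := ⌊D⌋₊ with hndef
  set z := ⌈R⌉₊ with hzdef
  have hn2 : 2 ≤ n := Nat.le_floor (by exact_mod_cast hD)
  have hRz : R ≤ (z:ℝ) := Nat.le_ceil R
  have hz2 : 2 ≤ z := by exact_mod_cast le_trans hR hRz
  have hnD : (n:ℝ) ≤ D := Nat.floor_le (by linarith)
  have hDn1 : D ≤ (n:ℝ) + 1 := le_of_lt (Nat.lt_floor_add_one D)
  have hz2R : (z:ℝ) ≤ 2*R := by
    have h := Nat.ceil_lt_add_one (by linarith : (0:ℝ) ≤ R)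
    rw [← hzdef] at h
    linarith
  set A : Finset ℕ := Finset.range (z + n + 1) with hA
  set T : Finset (ℕ × ℤ × ℤ) := (Finset.Icc 3 n) ×ˢ pairSet z with hT
  set f : ℕ × ℤ × ℤ → Finset ℕ := fun t =>
    ((t.2.1 ^ t.1 - (-t.2.2) ^ t.1).natAbs).primeFactors.filter (fun q => n < q) with hf
  set bad : Finset ℕ := A ∪ T.biUnion f with hbad
  -- coverage
  have hcover : {p : ℕ | p.Prime ∧ ∃ lam : (ZMod p)ˣ,
      3 ≤ orderOf lam ∧ (orderOf lam : ℝ) < D ∧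
      (rho2 p (((lam : ZMod p).val : ℤ)) : ℝ) < R} ⊆ ↑bad := by
    rintro p ⟨hp, lam, hd3, hdD, hrho⟩
    obtain ⟨h₁, h₂, hne0, hdvd, hval⟩ := rho2_spec p hp.pos (((lam : ZMod p).val : ℤ))
    have hdn : orderOf lam ≤ n := by
      have h1 : (orderOf lam : ℝ) < (n:ℝ)+1 := lt_of_lt_of_le hdD hDn1
      have h2 : orderOf lam < n + 1 := by exact_mod_cast h1
      omega
    have hprod : max |h₁| 1 * max |h₂| 1 ≤ (z:ℤ) := by
      rw [← hval]
      have h1 : (rho2 p (((lam : ZMod p).val : ℤ)) : ℝ) ≤ (z:ℝ) := le_trans (le_of_lt hrho) hRz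
      exact_mod_cast h1
    have hco := cover n z p hp lam hd3 hdn h₁ h₂ hne0 hdvd hprod
    rw [Finset.mem_coe, hbad, Finset.mem_union]
    rcases hco with h | h | ⟨hP, hIcc, hnp, hpf⟩
    · exact Or.inl (Finset.mem_range.mpr (by omega))
    · exact Or.inl (Finset.mem_range.mpr (by omega))
    · refine Or.inr (Finset.mem_biUnion.mpr ⟨(orderOf lam, h₁, h₂), ?_, ?_⟩)
      · rw [hT, Finset.mem_product]; exact ⟨hIcc, hP⟩
      · rw [hf]; exact Finset.mem_filter.mpr ⟨hpf, hnp⟩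
  have hlogD : 0 < Real.log D := Real.log_pos (by linarith)
  have hlogR : 0 < Real.log R := Real.log_pos (by linarith)
  have hlog2R : (0.693:ℝ) ≤ Real.log R := by
    have h := Real.log_two_gt_d9
    have h2 : Real.log 2 ≤ Real.log R := Real.log_le_log (by norm_num) hR
    linarith
  -- card chain
  have hNat : (Nat.card {p : ℕ // p.Prime ∧ ∃ lam : (ZMod p)ˣ,
      3 ≤ orderOf lam ∧ (orderOf lam : ℝ) < D ∧
      (rho2 p (((lam : ZMod p).val : ℤ)) : ℝ) < R} : ℝ) ≤ (bad.card : ℝ) := by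
    have h := Set.ncard_le_ncard hcover bad.finite_toSet
    rw [Set.ncard_coe_finset] at h
    rw [← Nat.card_coe_set_eq] at h
    exact_mod_cast h
  -- per-triple bound
  have hfcard : ∀ t ∈ T, ((f t).card : ℝ) ≤ 4 * D * Real.log R / Real.log D := by
    rintro ⟨d, h₁, h₂⟩ ht
    rw [hT, Finset.mem_product, Finset.mem_Icc] at ht
    obtain ⟨⟨hd3, hdn⟩, hP⟩ := ht
    rw [pairSet, Finset.mem_filter, Finset.mem_product, Finset.mem_Icc, Finset.mem_Icc] at hP
    obtain ⟨⟨⟨ha1, ha2⟩, hb1, hb2⟩, _⟩ := hP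
    set m := (h₁ ^ d - (-h₂) ^ d).natAbs with hm
    rcases eq_or_ne m 0 with hm0 | hm0
    · have hz0 : (f (d, h₁, h₂)).card = 0 := by
        rw [hf]; simp only
        rw [← hm, hm0]
        simp
      rw [hz0]
      simp only [Nat.cast_zero]
      positivity
    · have hkey : (n+1) ^ ((f (d, h₁, h₂)).card) ≤ m := by
        rw [hf]
        exact pow_card_filter_le m n hm0
      have hZ : ((m:ℕ):ℤ) ≤ (z:ℤ) ^ (n+1) := by
        rw [hm, ← Int.abs_eq_natAbs]
        have e1 : |h₁ ^ d - (-h₂) ^ d| ≤ |h₁|^d + |h₂|^d := by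
          calc |h₁ ^ d - (-h₂) ^ d| ≤ |h₁^d| + |(-h₂)^d| := abs_sub _ _
            _ = |h₁|^d + |h₂|^d := by rw [abs_pow, abs_pow, abs_neg]
        have hz1 : |h₁| ≤ (z:ℤ) := abs_le.mpr ⟨ha1, ha2⟩
        have hz2' : |h₂| ≤ (z:ℤ) := abs_le.mpr ⟨hb1, hb2⟩
        have e2 : |h₁|^d ≤ (z:ℤ)^d := pow_le_pow_left₀ (abs_nonneg _) hz1 d
        have e3 : |h₂|^d ≤ (z:ℤ)^d := pow_le_pow_left₀ (abs_nonneg _) hz2' d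
        have e4 : (2:ℤ) * (z:ℤ)^d ≤ (z:ℤ)^(d+1) := by
          rw [pow_succ]
          have hzz : (2:ℤ) ≤ (z:ℤ) := by exact_mod_cast hz2
          nlinarith [pow_nonneg (by positivity : (0:ℤ) ≤ (z:ℤ)) d]
        have e5 : (z:ℤ)^(d+1) ≤ (z:ℤ)^(n+1) := by
          apply pow_le_pow_right₀ (by exact_mod_cast Nat.one_le_of_lt hz2)
          omega
        linarith
      have hmz : m ≤ z ^ (n+1) := by exact_mod_cast hZ
      have hlogs : ((f (d, h₁, h₂)).card : ℝ) * Real.log ((n:ℝ)+1)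
          ≤ ((n:ℝ)+1) * Real.log (z:ℝ) := by
        have h1 : (((n+1:ℕ) ^ ((f (d, h₁, h₂)).card) : ℕ) : ℝ)
            ≤ ((z ^ (n+1) : ℕ) : ℝ) := by exact_mod_cast hkey.trans hmz
        have h2 := Real.log_le_log (by positivity) h1
        push_cast at h2
        rw [Real.log_pow, Real.log_pow] at h2
        push_cast at h2
        exact h2
      rw [le_div_iff₀ hlogD]
      have c1 : Real.log D ≤ Real.log ((n:ℝ)+1) := Real.log_le_log (by linarith) hDn1
      have c2 : Real.log (z:ℝ) ≤ 2 * Real.log R := by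
        have d1 : Real.log (z:ℝ) ≤ Real.log (2*R) := Real.log_le_log (by positivity) hz2R
        have d2 : Real.log (2*R) = Real.log 2 + Real.log R := Real.log_mul (by norm_num) (by linarith)
        have d3 : Real.log 2 ≤ Real.log R := Real.log_le_log (by norm_num) hR
        linarith
      have c3 : ((n:ℝ)+1) ≤ 2*D := by linarith
      have c4 : (0:ℝ) ≤ ((f (d, h₁, h₂)).card : ℝ) := by positivity
      have c5 : (0:ℝ) ≤ Real.log (z:ℝ) := Real.log_nonneg (by exact_mod_cast Nat.one_le_of_lt hz2)
      nlinarith [hlogs]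
  -- sum over triples
  have hbiU : ((T.biUnion f).card : ℝ) ≤ (T.card : ℝ) * (4 * D * Real.log R / Real.log D) := by
    have h1 : ((T.biUnion f).card : ℝ) ≤ ∑ t ∈ T, ((f t).card : ℝ) := by
      have := Finset.card_biUnion_le (s := T) (t := f)
      calc ((T.biUnion f).card : ℝ) ≤ ((∑ t ∈ T, (f t).card : ℕ) : ℝ) := by exact_mod_cast this
        _ = ∑ t ∈ T, ((f t).card : ℝ) := by push_cast; rfl
    have h2 : ∑ t ∈ T, ((f t).card : ℝ) ≤ T.card * (4 * D * Real.log R / Real.log D) := by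
      have := Finset.sum_le_card_nsmul T _ _ hfcard
      rwa [nsmul_eq_mul] at this
    linarith
  have hTcard : (T.card : ℝ) ≤ D * (20 * (z:ℝ) * Real.log (z:ℝ)) := by
    rw [hT, Finset.card_product]
    push_cast
    have e1 : ((Finset.Icc 3 n).card : ℝ) ≤ D := by
      rw [Nat.card_Icc]
      have : ((n + 1 - 3 : ℕ) : ℝ) ≤ (n:ℝ) := by
        have : n + 1 - 3 ≤ n := by omega
        exact_mod_cast this
      linarith
    have e2 := pairSet_card z hz2
    have e3 : (0:ℝ) ≤ ((pairSet z).card : ℝ) := by positivity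
    have e4 : (0:ℝ) ≤ D := by linarith
    calc ((Finset.Icc 3 n).card : ℝ) * ((pairSet z).card : ℝ)
        ≤ D * ((pairSet z).card : ℝ) := mul_le_mul_of_nonneg_right e1 e3
      _ ≤ D * (20 * (z:ℝ) * Real.log (z:ℝ)) := mul_le_mul_of_nonneg_left e2 e4
  have hzlog : 20 * (z:ℝ) * Real.log (z:ℝ) ≤ 80 * R * Real.log R := by
    have c2 : Real.log (z:ℝ) ≤ 2 * Real.log R := by
      have d1 : Real.log (z:ℝ) ≤ Real.log (2*R) := Real.log_le_log (by positivity) hz2R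
      have d2 : Real.log (2*R) = Real.log 2 + Real.log R := Real.log_mul (by norm_num) (by linarith)
      have d3 : Real.log 2 ≤ Real.log R := Real.log_le_log (by norm_num) hR
      linarith
    have c5 : (0:ℝ) ≤ Real.log (z:ℝ) := Real.log_nonneg (by exact_mod_cast Nat.one_le_of_lt hz2)
    have c6 : (0:ℝ) < (z:ℝ) := by positivity
    nlinarith
  have hAcard : ((A.card : ℕ) : ℝ) ≤ 2*R + D + 1 := by
    rw [hA, Finset.card_range]
    push_cast
    linarith
  -- final assembly
  have hbadcard : ((bad.card : ℕ) : ℝ)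
      ≤ (2*R + D + 1) + (D * (80 * R * Real.log R)) * (4 * D * Real.log R / Real.log D) := by
    have h1 : bad.card ≤ A.card + (T.biUnion f).card := by
      rw [hbad]; exact Finset.card_union_le _ _
    have h2 : ((bad.card : ℕ) : ℝ) ≤ ((A.card : ℕ) : ℝ) + ((T.biUnion f).card : ℝ) := by
      exact_mod_cast h1
    have h3 : (T.card : ℝ) ≤ D * (80 * R * Real.log R) := by
      calc (T.card : ℝ) ≤ D * (20 * (z:ℝ) * Real.log (z:ℝ)) := hTcard
        _ ≤ D * (80 * R * Real.log R) := mul_le_mul_of_nonneg_left hzlog (by linarith)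
    have h4 : (0:ℝ) ≤ 4 * D * Real.log R / Real.log D := by positivity
    have h5 : ((T.biUnion f).card : ℝ)
        ≤ (D * (80 * R * Real.log R)) * (4 * D * Real.log R / Real.log D) :=
      le_trans hbiU (mul_le_mul_of_nonneg_right h3 h4)
    linarith
  have hbig : (D * (80 * R * Real.log R)) * (4 * D * Real.log R / Real.log D)
      = 320 * (D^2 * R * (Real.log R)^2 / Real.log D) := by
    field_simp
    ring
  have hsmall : 2*R + D + 1 ≤ 5 * (D^2 * R * (Real.log R)^2 / Real.log D) := by
    rw [← mul_div_assoc, le_div_iff₀ hlogD]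
    have e1 : 2*R + D + 1 ≤ 2*D*R := by nlinarith
    have e2 : Real.log D ≤ D := by
      have := Real.log_le_sub_one_of_pos (by linarith : (0:ℝ) < D)
      linarith
    have e3 : (0.4:ℝ) ≤ (Real.log R)^2 := by nlinarith [hlog2R]
    have s1 : (2*R + D + 1) * Real.log D ≤ 2*D*R * Real.log D :=
      mul_le_mul_of_nonneg_right e1 hlogD.le
    have s2 : 2*D*R * Real.log D ≤ 2*D*R*D := by
      have : (0:ℝ) ≤ 2*D*R := by nlinarith
      nlinarith [mul_le_mul_of_nonneg_left e2 this]
    have s3 : 2*D*R*D ≤ 5 * (D^2 * R * (Real.log R)^2) := by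
      have h1 : (0:ℝ) ≤ D^2 * R := by positivity
      nlinarith [mul_le_mul_of_nonneg_left e3 h1]
    linarith
  have hXpos : (0:ℝ) < D^2 * R * (Real.log R)^2 / Real.log D := by positivity
  calc (Nat.card {p : ℕ // p.Prime ∧ ∃ lam : (ZMod p)ˣ,
          3 ≤ orderOf lam ∧ (orderOf lam : ℝ) < D ∧
          (rho2 p (((lam : ZMod p).val : ℤ)) : ℝ) < R} : ℝ)
      ≤ (bad.card : ℝ) := hNat
    _ ≤ (2*R + D + 1) + (D * (80 * R * Real.log R)) * (4 * D * Real.log R / Real.log D) := hbadcard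
    _ ≤ 5 * (D^2 * R * (Real.log R)^2 / Real.log D) + 320 * (D^2 * R * (Real.log R)^2 / Real.log D) := by
        rw [hbig] at *
        linarith
    _ ≤ 1000 * (D^2 * R * (Real.log R)^2 / Real.log D) := by linarith
    _ = 1000 * D^2 * R * (Real.log R)^2 / Real.log D := by ring
end
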